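/- If p - p' < √(p') for every prime p ≥ 131 (p' the previous prime), then for every integer n ≥ 131 the interval (n, n + √n) contains a prime. -/
import Mathlib


def PrevPrime (p p' : ℕ) : Prop :=
  p'.Prime ∧ p' < p ∧ ∀ r : ℕ, r.Prime → r < p → r ≤ p'

theorem stmt13
    (h : ∀ p p' : ℕ, p.Prime → 131 ≤ p → PrevPrime p p' → (p : ℝ) - p' < Real.sqrt p') :
    ∀ n : ℕ, 131 ≤ n → ∃ r : ℕ, r.Prime ∧ (n : ℝ) < r ∧ (r : ℝ) < n + Real.sqrt n := by
  intro n hn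
  -- p : smallest prime > n
  obtain ⟨q, hq1, hq2⟩ := Nat.exists_infinite_primes (n + 1)
  have hex : ∃ p, p.Prime ∧ n < p := ⟨q, hq2, hq1⟩
  classical
  set p := Nat.find hex with hp
  obtain ⟨hpp, hnp⟩ : p.Prime ∧ n < p := Nat.find_spec hex
  have hpmin : ∀ m < p, ¬(m.Prime ∧ n < m) := fun m hm => Nat.find_min hex hm
  -- p' : largest prime ≤ n
  set p' := Nat.findGreatest Nat.Prime n with hp'
  have h131 : Nat.Prime 131 := by norm_num
  have hp'p : p'.Prime := Nat.findGreatest_spec hn h131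
  have hp'le : p' ≤ n := Nat.findGreatest_le n
  have hprev : PrevPrime p p' := by
    refine ⟨hp'p, lt_of_le_of_lt hp'le hnp, fun r hr hrp => ?_⟩
    have hrn : r ≤ n := by
      by_contra hc
      exact hpmin r hrp ⟨hr, Nat.lt_of_not_le hc⟩
    exact Nat.le_findGreatest hrn hr
  have hple : 131 ≤ p := le_trans hn (le_of_lt hnp)
  have key := h p p' hpp hple hprev
  refine ⟨p, hpp, by exact_mod_cast hnp, ?_⟩
  have hsq : Real.sqrt p' ≤ Real.sqrt n := Real.sqrt_le_sqrt (by exact_mod_cast hp'le)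
  have hcast : (p' : ℝ) ≤ n := by exact_mod_cast hp'le
  linarith
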